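/- arXiv:1810.09787 — 4 statements merged into one kernel-verified Lean document; each statement's English description precedes it below -/
import Mathlib

section
/- Every positive integer N has a unique representation N = Σ_{i=0}^{I} f_i · T(i+3), where T is the tribonacci sequence (T(0)=T(1)=0, T(2)=1, T(n)=T(n-1)+T(n-2)+T(n-3)), each f_i ∈ {0,1}, f_I = 1, and no three consecutive f_i, f_{i+1}, f_{i+2} are all 1. -/
/-- The tribonacci sequence: T(0)=0, T(1)=0, T(2)=1, T(n)=T(n-1)+T(n-2)+T(n-3). -/
def T : ℕ → ℕ
  | 0 => 0
  | 1 => 0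
  | 2 => 1
  | (n+3) => T (n+2) + T (n+1) + T n

lemma T_rec (n : ℕ) : T (n+3) = T (n+2) + T (n+1) + T n := rfl

lemma T_mono : Monotone T := by
  apply monotone_nat_of_le_succ
  intro n
  match n with
  | 0 => simp [T]
  | 1 => simp [T]
  | (m+2) =>
    have e : T (m + 2 + 1) = T (m + 2) + T (m + 1) + T m := rfl
    omega

lemma T_pos (n : ℕ) : 0 < T (n + 2) := by
  have := T_mono (Nat.le_add_left 2 n)
  simp [T] at this; omega

lemma T_ge (n : ℕ) : n + 1 ≤ T (n + 3) := by
  induction n with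
  | zero => simp [T]
  | succ m ih =>
    have h1 := T_pos m
    have e1 : T (m + 1 + 2) = T (m + 3) := rfl
    have e2 : T (m + 1 + 1) = T (m + 2) := rfl
    rw [T_rec]
    omega

def No3 (s : Finset ℕ) : Prop := ∀ i, ¬(i ∈ s ∧ i + 1 ∈ s ∧ i + 2 ∈ s)

lemma No3_subset {s t : Finset ℕ} (h : s ⊆ t) (ht : No3 t) : No3 s :=
  fun i hi => ht i ⟨h hi.1, h hi.2.1, h hi.2.2⟩

lemma sum_lt_of_lt (k : ℕ) : ∀ s : Finset ℕ, (∀ i ∈ s, i < k) → No3 s →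
    ∑ i ∈ s, T (i + 3) < T (k + 3) := by
  induction k using Nat.strong_induction_on with
  | _ k ih =>
  intro s hs h3
  match k with
  | 0 =>
    have : s = ∅ := Finset.eq_empty_of_forall_notMem (fun i hi => by have := hs i hi; omega)
    simp [this, T]
  | 1 =>
    have hsub : s ⊆ Finset.range 1 := fun i hi => Finset.mem_range.2 (hs i hi)
    have := Finset.sum_le_sum_of_subset (f := fun i => T (i + 3)) hsub
    simp [Finset.sum_range_succ, T] at this ⊢
    omega
  | 2 =>
    have hsub : s ⊆ Finset.range 2 := fun i hi => Finset.mem_range.2 (hs i hi)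
    have := Finset.sum_le_sum_of_subset (f := fun i => T (i + 3)) hsub
    have h45 : T 4 = 2 ∧ T 5 = 4 := by constructor <;> rfl
    simp [Finset.sum_range_succ, T] at this ⊢
    omega
  | (m+3) =>
    by_cases h2 : m + 2 ∈ s
    · have hsum2 : ∑ i ∈ s, T (i + 3) = T (m + 5) + ∑ i ∈ s.erase (m+2), T (i + 3) := by
        rw [← Finset.insert_erase h2, Finset.sum_insert (Finset.notMem_erase _ _),
          Finset.insert_erase h2]
      by_cases h1 : m + 1 ∈ s
      · have h0 : m ∉ s := fun h => h3 m ⟨h, h1, h2⟩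
        have h1' : m + 1 ∈ s.erase (m+2) := Finset.mem_erase.2 ⟨by omega, h1⟩
        have hsum1 : ∑ i ∈ s.erase (m+2), T (i + 3) =
            T (m + 4) + ∑ i ∈ (s.erase (m+2)).erase (m+1), T (i + 3) := by
          rw [← Finset.insert_erase h1', Finset.sum_insert (Finset.notMem_erase _ _),
            Finset.insert_erase h1']
        have hlt : ∀ i ∈ (s.erase (m+2)).erase (m+1), i < m := by
          intro i hi
          simp only [Finset.mem_erase] at hi
          have := hs i hi.2.2
          have hne : i ≠ m := fun h => h0 (h ▸ hi.2.2)
          omega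
        have hbound := ih m (by omega) _ hlt
          (No3_subset (Finset.Subset.trans (Finset.erase_subset _ _) (Finset.erase_subset _ _)) h3)
        have hrec := T_rec (m + 3)
        have e1 : T (m + 3 + 3) = T (m + 6) := rfl
        have e2 : T (m + 3 + 2) = T (m + 5) := rfl
        have e3 : T (m + 3 + 1) = T (m + 4) := rfl
        omega
      · have hlt : ∀ i ∈ s.erase (m+2), i < m + 1 := by
          intro i hi
          simp only [Finset.mem_erase] at hi
          have := hs i hi.2
          have hne : i ≠ m + 1 := fun h => h1 (h ▸ hi.2)
          omega
        have hbound := ih (m+1) (by omega) _ hlt (No3_subset (Finset.erase_subset _ _) h3)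
        have hrec := T_rec (m + 3)
        have hp := T_pos (m + 2)
        have e1 : T (m + 3 + 3) = T (m + 6) := rfl
        have e2 : T (m + 3 + 2) = T (m + 5) := rfl
        have e3 : T (m + 3 + 1) = T (m + 4) := rfl
        have e4 : T (m + 1 + 3) = T (m + 4) := rfl
        have e5 : T (m + 2 + 2) = T (m + 4) := rfl
        omega
    · have hlt : ∀ i ∈ s, i < m + 2 := by
        intro i hi
        have := hs i hi
        have hne : i ≠ m + 2 := fun h => h2 (h ▸ hi)
        omega
      have hbound := ih (m+2) (by omega) _ hlt h3
      have hrec := T_rec (m + 3)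
      have e1 : T (m + 3 + 3) = T (m + 6) := rfl
      have e2 : T (m + 3 + 2) = T (m + 5) := rfl
      have e3 : T (m + 3 + 1) = T (m + 4) := rfl
      have e4 : T (m + 2 + 3) = T (m + 5) := rfl
      omega

lemma rep_unique : ∀ N : ℕ, ∀ s t : Finset ℕ, No3 s → No3 t →
    ∑ i ∈ s, T (i + 3) = N → ∑ i ∈ t, T (i + 3) = N → s = t := by
  intro N
  induction N using Nat.strong_induction_on with
  | _ N ih =>
  intro s t hs3 ht3 hsN htN
  have empty_of : ∀ u : Finset ℕ, ∑ i ∈ u, T (i + 3) = 0 → u = ∅ := by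
    intro u hu
    refine Finset.eq_empty_of_forall_notMem (fun i hi => ?_)
    have h1 : T (i + 3) ≤ ∑ j ∈ u, T (j + 3) :=
      Finset.single_le_sum (f := fun j => T (j + 3)) (fun _ _ => Nat.zero_le _) hi
    rw [hu] at h1
    have := T_pos (i + 1)
    have e : T (i + 1 + 2) = T (i + 3) := rfl
    omega
  rcases Nat.eq_zero_or_pos N with rfl | hN
  · rw [empty_of s hsN, empty_of t htN]
  · have hs : s.Nonempty := by
      rcases s.eq_empty_or_nonempty with rfl | h
      · simp at hsN; omega
      · exact h
    have ht : t.Nonempty := by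
      rcases t.eq_empty_or_nonempty with rfl | h
      · simp at htN; omega
      · exact h
    set a := s.max' hs with ha
    set b := t.max' ht with hb
    have haem : a ∈ s := s.max'_mem hs
    have hbem : b ∈ t := t.max'_mem ht
    have haN : T (a + 3) ≤ N := by
      have h := Finset.single_le_sum (f := fun i => T (i + 3)) (fun _ _ => Nat.zero_le _)
        (s.max'_mem hs)
      rw [hsN] at h; exact h
    have hbN : T (b + 3) ≤ N := by
      have h := Finset.single_le_sum (f := fun i => T (i + 3)) (fun _ _ => Nat.zero_le _)
        (t.max'_mem ht)
      rw [htN] at h; exact h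
    have hNa : N < T (a + 4) := by
      have h := sum_lt_of_lt (a + 1) s (fun i hi => by have := s.le_max' i hi; omega) hs3
      rw [hsN] at h
      have e : T (a + 1 + 3) = T (a + 4) := rfl
      omega
    have hNb : N < T (b + 4) := by
      have h := sum_lt_of_lt (b + 1) t (fun i hi => by have := t.le_max' i hi; omega) ht3
      rw [htN] at h
      have e : T (b + 1 + 3) = T (b + 4) := rfl
      omega
    have hab : a = b := by
      rcases lt_trichotomy a b with h | h | h
      · have := T_mono (show a + 4 ≤ b + 3 by omega)
        omega
      · exact h
      · have := T_mono (show b + 4 ≤ a + 3 by omega)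
        omega
    rw [← hab] at hbem
    have hsa : ∑ i ∈ s.erase a, T (i + 3) = N - T (a + 3) := by
      have : ∑ i ∈ s, T (i + 3) = T (a + 3) + ∑ i ∈ s.erase a, T (i + 3) := by
        rw [← Finset.insert_erase haem, Finset.sum_insert (Finset.notMem_erase _ _),
          Finset.insert_erase haem]
      omega
    have hta : ∑ i ∈ t.erase a, T (i + 3) = N - T (a + 3) := by
      have : ∑ i ∈ t, T (i + 3) = T (a + 3) + ∑ i ∈ t.erase a, T (i + 3) := by
        rw [← Finset.insert_erase hbem, Finset.sum_insert (Finset.notMem_erase _ _),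
          Finset.insert_erase hbem]
      omega
    have hpos : 0 < T (a + 3) := T_pos (a + 1)
    have heq := ih (N - T (a + 3)) (by omega) (s.erase a) (t.erase a)
      (No3_subset (Finset.erase_subset _ _) hs3) (No3_subset (Finset.erase_subset _ _) ht3)
      hsa hta
    calc s = insert a (s.erase a) := (Finset.insert_erase haem).symm
    _ = insert a (t.erase a) := by rw [heq]
    _ = t := Finset.insert_erase hbem

lemma exists_k (N : ℕ) (hN : 0 < N) : ∃ k, T (k + 3) ≤ N ∧ N < T (k + 4) := by
  have hex : ∃ k, N < T (k + 4) := by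
    refine ⟨N, ?_⟩
    have := T_ge (N + 1)
    have e : T (N + 1 + 3) = T (N + 4) := rfl
    omega
  refine ⟨Nat.find hex, ?_, Nat.find_spec hex⟩
  rcases Nat.eq_zero_or_pos (Nat.find hex) with h0 | hpos
  · rw [h0]
    have e : T (0 + 3) = 1 := rfl
    omega
  · obtain ⟨j, hj⟩ : ∃ j, Nat.find hex = j + 1 := ⟨Nat.find hex - 1, by omega⟩
    have hjm := Nat.find_min hex (show j < Nat.find hex by omega)
    rw [hj]
    have e : T (j + 4) = T (j + 1 + 3) := rfl
    omega

lemma rep_exists : ∀ N : ℕ, ∃ s : Finset ℕ,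
    N = ∑ i ∈ s, T (i + 3) ∧ No3 s ∧ ∀ i ∈ s, T (i + 3) ≤ N := by
  intro N
  induction N using Nat.strong_induction_on with
  | _ N ih =>
  rcases Nat.eq_zero_or_pos N with rfl | hN
  · exact ⟨∅, by simp, fun i hi => by simp at hi, by simp⟩
  · obtain ⟨k, hk, hk4⟩ := exists_k N hN
    have hkpos : 0 < T (k + 3) := T_pos (k + 1)
    obtain ⟨s', h1, h2, h3⟩ := ih (N - T (k + 3)) (by omega)
    have hrec4 := T_rec (k + 1)
    have hrec3 := T_rec k
    have he14 : T (k + 1 + 3) = T (k + 4) := by rw [show k + 1 + 3 = k + 4 by omega]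
    have eb1 : T (k + 1 + 3) = T (k + 4) := rfl
    have eb2 : T (k + 1 + 2) = T (k + 3) := rfl
    have eb3 : T (k + 1 + 1) = T (k + 2) := rfl
    have hrek : ∀ i ∈ s', i < k := by
      intro i hi
      by_contra hik
      have hm : T (k + 3) ≤ T (i + 3) := T_mono (by omega)
      have := h3 i hi
      omega
    have hknot : k ∉ s' := fun h => absurd (hrek k h) (lt_irrefl k)
    refine ⟨insert k s', ?_, ?_, ?_⟩
    · rw [Finset.sum_insert hknot]
      omega
    · rintro i ⟨hi, hi1, hi2⟩
      simp only [Finset.mem_insert] at hi hi1 hi2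
      rcases hi2 with hk2 | hi2
      · have hii : i ∈ s' := by
          rcases hi with h | h
          · exfalso; omega
          · exact h
        have hii1 : i + 1 ∈ s' := by
          rcases hi1 with h | h
          · exfalso; omega
          · exact h
        have hpair : T (i + 3) + T (i + 1 + 3) ≤ ∑ j ∈ s', T (j + 3) := by
          have hsub : ({i, i + 1} : Finset ℕ) ⊆ s' := by
            intro x hx
            simp only [Finset.mem_insert, Finset.mem_singleton] at hx
            rcases hx with rfl | rfl <;> assumption
          calc T (i + 3) + T (i + 1 + 3)
              = ∑ j ∈ ({i, i + 1} : Finset ℕ), T (j + 3) := by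
                rw [Finset.sum_pair (by omega)]
            _ ≤ _ := Finset.sum_le_sum_of_subset hsub
        have e1 : T (i + 3) = T (k + 1) := by rw [show i + 3 = k + 1 by omega]
        have e2 : T (i + 1 + 3) = T (k + 2) := by rw [show i + 1 + 3 = k + 2 by omega]
        omega
      · have hii : i ∈ s' := by
          rcases hi with h | h
          · exfalso; have := hrek _ hi2; omega
          · exact h
        have hii1 : i + 1 ∈ s' := by
          rcases hi1 with h | h
          · exfalso; have := hrek _ hi2; omega
          · exact h
        exact h2 i ⟨hii, hii1, hi2⟩
    · intro i hi
      simp only [Finset.mem_insert] at hi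
      rcases hi with rfl | hi
      · exact hk
      · have := h3 i hi; omega

/-- Every positive integer has a unique tribonacci (Zeckendorf-type) representation:
a unique finite set of indices `s` (the indices `i` with digit `f_i = 1`) with
`N = ∑ i ∈ s, T (i+3)` and no three consecutive indices all in `s`. -/
theorem tribonacci_representation_unique (N : ℕ) (hN : 0 < N) :
    ∃! s : Finset ℕ,
      N = ∑ i ∈ s, T (i + 3) ∧ ∀ i, ¬(i ∈ s ∧ i + 1 ∈ s ∧ i + 2 ∈ s) := by
  obtain ⟨s, hsum, h3, -⟩ := rep_exists N
  refine ⟨s, ⟨hsum, h3⟩, ?_⟩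
  rintro t ⟨htsum, ht3⟩
  exact rep_unique N t s ht3 h3 htsum.symm hsum.symm
end

section
/- With t the infinite tribonacci word, A(n) the position of the (n+1)-st occurrence of 1 in t, and z(n) = Σ_{j=0}^{n} t(j) (with z(-1)=0), one has A(n) = 4n + 1 − z(n−1) for all n ≥ 0. -/
/-- The tribonacci substitution on letters: 0 ↦ 01, 1 ↦ 02, 2 ↦ 0. -/
def sigmaW : ℕ → List ℕ
  | 0 => [0, 1]
  | 1 => [0, 2]
  | _ => [0]

/-- The substitution extended to words (concatenation homomorphism). -/
def sigmaL (w : List ℕ) : List ℕ := w.flatMap sigmaW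

/-- The infinite tribonacci word t = 0,1,0,2,0,1,0,0,1,0,2,...,
the fixed point of the substitution starting from 0. -/
def t (n : ℕ) : ℕ := (sigmaL^[n + 1] [0]).getD n 0

def tribP (m : ℕ) : List ℕ := sigmaL^[m] [0]

lemma tribP_succ (m : ℕ) : tribP (m + 1) = sigmaL (tribP m) := by
  simp [tribP, Function.iterate_succ_apply']

lemma sigmaL_append (u v : List ℕ) : sigmaL (u ++ v) = sigmaL u ++ sigmaL v := by
  simp [sigmaL]

lemma sigmaL_prefix {u v : List ℕ} (h : u <+: v) : sigmaL u <+: sigmaL v := by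
  obtain ⟨d, rfl⟩ := h
  rw [sigmaL_append]
  exact List.prefix_append _ _

lemma tribP_prefix_succ (m : ℕ) : tribP m <+: tribP (m + 1) := by
  induction m with
  | zero => exact ⟨[1], rfl⟩
  | succ k ih =>
    rw [tribP_succ, tribP_succ]
    exact sigmaL_prefix ih

lemma tribP_prefix {m m' : ℕ} (h : m ≤ m') : tribP m <+: tribP m' := by
  induction m' with
  | zero => simp_all
  | succ k ih =>
    rcases Nat.lt_succ_iff_lt_or_eq.mp (Nat.lt_succ_of_le h) with h' | rfl
    · exact (ih (Nat.lt_succ_iff.mp h')).trans (tribP_prefix_succ k)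
    · exact List.prefix_rfl

lemma tribP_head (m : ℕ) : ∃ r, tribP m = 0 :: r := by
  obtain ⟨d, hd⟩ := tribP_prefix (Nat.zero_le m)
  exact ⟨d, hd.symm⟩

lemma length_sigmaL_ge (w : List ℕ) : w.length ≤ (sigmaL w).length := by
  induction w with
  | nil => simp [sigmaL]
  | cons a r ih =>
    have : sigmaL (a :: r) = sigmaW a ++ sigmaL r := rfl
    rw [this, List.length_append, List.length_cons]
    have : 1 ≤ (sigmaW a).length := by
      match a with
      | 0 => simp [sigmaW]
      | 1 => simp [sigmaW]
      | (n+2) => simp [sigmaW]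
    omega

lemma tribP_length (m : ℕ) : m < (tribP m).length := by
  induction m with
  | zero => simp [tribP]
  | succ k ih =>
    obtain ⟨r, hr⟩ := tribP_head k
    rw [tribP_succ, hr]
    have h1 : sigmaL (0 :: r) = [0, 1] ++ sigmaL r := rfl
    have h2 := length_sigmaL_ge r
    rw [h1, List.length_append]
    rw [hr] at ih
    simp at ih ⊢
    omega

lemma getD_of_prefix {u v : List ℕ} (h : u <+: v) {n : ℕ} (hn : n < u.length) :
    v.getD n 0 = u.getD n 0 := by
  obtain ⟨d, rfl⟩ := h
  rw [List.getD_append _ _ _ _ hn]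

lemma t_eq_getD {n m : ℕ} (h : n < (tribP m).length) : t n = (tribP m).getD n 0 := by
  have hn : n < (tribP (n + 1)).length := Nat.lt_of_lt_of_le (Nat.lt_succ_self n) (Nat.le_of_lt (tribP_length (n+1)))
  rcases le_total (n + 1) m with hle | hle
  · exact (getD_of_prefix (tribP_prefix hle) hn).symm
  · exact (getD_of_prefix (tribP_prefix hle) h)

lemma mem_tribP_le {m x : ℕ} (hx : x ∈ tribP m) : x ≤ 2 := by
  induction m generalizing x with
  | zero => simp [tribP] at hx; omega
  | succ k ih =>
    rw [tribP_succ, sigmaL, List.mem_flatMap] at hx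
    obtain ⟨a, _, hxa⟩ := hx
    match a with
    | 0 => simp [sigmaW] at hxa; omega
    | 1 => simp [sigmaW] at hxa; omega
    | (b+2) => simp [sigmaW] at hxa; omega

lemma t_le (n : ℕ) : t n ≤ 2 := by
  have hn : n < (tribP (n + 1)).length := Nat.lt_of_lt_of_le (Nat.lt_succ_self n) (Nat.le_of_lt (tribP_length (n+1)))
  have : t n = (tribP (n+1)).getD n 0 := t_eq_getD hn
  rw [this, List.getD_eq_getElem _ _ hn]
  exact mem_tribP_le (List.getElem_mem hn)

/-- Start position of the block generated by the k-th letter. -/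
def st : ℕ → ℕ
  | 0 => 0
  | k + 1 => st k + (sigmaW (t k)).length

lemma sigmaW_length_pos (x : ℕ) : 0 < (sigmaW x).length := by
  match x with
  | 0 => simp [sigmaW]
  | 1 => simp [sigmaW]
  | (n+2) => simp [sigmaW]

lemma sigmaW_length_le (x : ℕ) : (sigmaW x).length ≤ 2 := by
  match x with
  | 0 => simp [sigmaW]
  | 1 => simp [sigmaW]
  | (n+2) => simp [sigmaW]

lemma sigmaW_length_eq (x : ℕ) (hx : x ≤ 2) : (sigmaW x).length = if x = 2 then 1 else 2 := by
  interval_cases x <;> simp [sigmaW]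

lemma st_strictMono : StrictMono st := by
  apply strictMono_nat_of_lt_succ
  intro n
  have := sigmaW_length_pos (t n)
  simp [st]; omega

/-- sigmaL of the k-prefix of tribP m has length st k and is a prefix of tribP (m+1). -/
lemma sigmaL_take (m k : ℕ) (h : k ≤ (tribP m).length) :
    (sigmaL ((tribP m).take k)).length = st k ∧ sigmaL ((tribP m).take k) <+: tribP (m + 1) := by
  constructor
  · induction k with
    | zero => simp [sigmaL, st]
    | succ j ih =>
      have hj : j < (tribP m).length := h
      have htake : (tribP m).take (j + 1) = (tribP m).take j ++ [(tribP m)[j]] := by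
        rw [List.take_succ, List.getElem?_eq_getElem hj]
        rfl
      have htj : (tribP m)[j] = t j := by
        rw [t_eq_getD hj, List.getD_eq_getElem _ _ hj]
      rw [htake, sigmaL_append, List.length_append, ih (le_of_lt hj), htj]
      simp [st, sigmaL]
  · rw [tribP_succ]
    exact sigmaL_prefix (List.take_prefix _ _)

/-- The block lemma: the letters of t starting at st k spell out sigmaW (t k). -/
lemma t_block (k : ℕ) {i : ℕ} (hi : i < (sigmaW (t k)).length) :
    t (st k + i) = (sigmaW (t k)).getD i 0 := by
  set m := k + 1 with hm
  have hk : k < (tribP m).length := tribP_length m |>.trans_le' (Nat.le_refl _) |> fun _ => by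
    have := tribP_length m; omega
  have htake : (tribP m).take (k + 1) = (tribP m).take k ++ [t k] := by
    rw [List.take_succ, List.getElem?_eq_getElem hk]
    have : (tribP m)[k] = t k := by rw [t_eq_getD hk, List.getD_eq_getElem _ _ hk]
    rw [this]; rfl
  obtain ⟨hlen, hpre⟩ := sigmaL_take m k (le_of_lt hk)
  obtain ⟨hlen1, hpre1⟩ := sigmaL_take m (k+1) hk
  rw [htake, sigmaL_append] at hpre1 hlen1
  have hsigk : sigmaL [t k] = sigmaW (t k) := by simp [sigmaL]
  rw [hsigk] at hpre1 hlen1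
  have hib : st k + i < (sigmaL ((tribP m).take k) ++ sigmaW (t k)).length := by
    rw [List.length_append, hlen]; omega
  have hlt : st k + i < (tribP (m+1)).length := lt_of_lt_of_le hib hpre1.length_le
  rw [t_eq_getD hlt, getD_of_prefix hpre1 hib]
  rw [List.getD_append_right]
  · rw [hlen]; congr 1; omega
  · rw [hlen]; omega

lemma t_st (k : ℕ) : t (st k) = 0 := by
  have h := t_block k (sigmaW_length_pos (t k))
  rw [Nat.add_zero] at h
  rw [h]
  match h' : t k with
  | 0 => simp [sigmaW]
  | 1 => simp [sigmaW]
  | (n+2) => simp [sigmaW]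

lemma t_st_one_of_zero {k : ℕ} (h : t k = 0) : t (st k + 1) = 1 := by
  have h1 : (1 : ℕ) < (sigmaW (t k)).length := by rw [h]; simp [sigmaW]
  have := t_block k h1
  rw [this, h]; simp [sigmaW]

lemma t_st_one_of_one {k : ℕ} (h : t k = 1) : t (st k + 1) = 2 := by
  have h1 : (1 : ℕ) < (sigmaW (t k)).length := by rw [h]; simp [sigmaW]
  have := t_block k h1
  rw [this, h]; simp [sigmaW]

lemma st_succ (k : ℕ) : st (k + 1) = st k + (sigmaW (t k)).length := rfl

lemma exists_st (m : ℕ) : ∃ k, st k ≤ m ∧ m < st (k + 1) := by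
  induction m with
  | zero => exact ⟨0, by simp [st], by have := sigmaW_length_pos (t 0); simp [st]; omega⟩
  | succ j ih =>
    obtain ⟨k, h1, h2⟩ := ih
    by_cases h : j + 1 < st (k + 1)
    · exact ⟨k, by omega, h⟩
    · refine ⟨k + 1, by omega, ?_⟩
      have := sigmaW_length_pos (t (k+1))
      rw [st_succ (k+1)]
      omega

lemma t_eq_zero_iff (m : ℕ) : t m = 0 ↔ ∃ k, m = st k := by
  constructor
  · intro hm
    obtain ⟨k, h1, h2⟩ := exists_st m
    rcases eq_or_lt_of_le h1 with heq | hlt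
    · exact ⟨k, heq.symm⟩
    · exfalso
      have hlen := sigmaW_length_le (t k)
      rw [st_succ] at h2
      have hmi : m = st k + 1 := by omega
      have hi : (1:ℕ) < (sigmaW (t k)).length := by omega
      have hb := t_block k hi
      rw [← hmi] at hb
      rw [hm] at hb
      have htk := t_le k
      interval_cases h' : t k <;> simp [h', sigmaW] at hb hi
  · rintro ⟨k, rfl⟩; exact t_st k

lemma block_pos {m : ℕ} (hm : t m ≠ 0) :
    ∃ k, m = st k + 1 ∧ t m = (if t k = 0 then 1 else 2) ∧ t k ≠ 2 := by
  obtain ⟨k, h1, h2⟩ := exists_st m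
  rcases eq_or_lt_of_le h1 with heq | hlt
  · exact absurd (heq ▸ t_st k) hm
  · have hlen := sigmaW_length_le (t k)
    rw [st_succ] at h2
    have hmi : m = st k + 1 := by omega
    have hi : (1:ℕ) < (sigmaW (t k)).length := by omega
    have hb := t_block k hi
    rw [← hmi] at hb
    have htk := t_le k
    refine ⟨k, hmi, ?_, ?_⟩
    · interval_cases h' : t k <;> simp [h', sigmaW] at hb ⊢ <;> omega
    · intro h'; rw [h'] at hi; simp [sigmaW] at hi
  
lemma t_eq_one_iff (m : ℕ) : t m = 1 ↔ ∃ k, t k = 0 ∧ m = st k + 1 := by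
  constructor
  · intro hm
    obtain ⟨k, hk1, hk2, hk3⟩ := block_pos (by omega : t m ≠ 0)
    refine ⟨k, ?_, hk1⟩
    by_contra h'
    rw [if_neg h'] at hk2; omega
  · rintro ⟨k, hk, rfl⟩; exact t_st_one_of_zero hk

lemma t_eq_two_iff (m : ℕ) : t m = 2 ↔ ∃ k, t k = 1 ∧ m = st k + 1 := by
  constructor
  · intro hm
    obtain ⟨k, hk1, hk2, hk3⟩ := block_pos (by omega : t m ≠ 0)
    refine ⟨k, ?_, hk1⟩
    have := t_le k
    by_contra h'
    have : t k = 0 := by omega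
    rw [if_pos this] at hk2; omega
  · rintro ⟨k, hk, rfl⟩; exact t_st_one_of_one hk

open Nat in
lemma st_add_count2 (n : ℕ) : st n + Nat.count (fun k => t k = 2) n = 2 * n := by
  induction n with
  | zero => simp [st]
  | succ j ih =>
    rw [st_succ, Nat.count_succ, sigmaW_length_eq (t j) (t_le j)]
    by_cases h : t j = 2 <;> simp [h] <;> omega

lemma count_zero_st (n : ℕ) : Nat.count (fun k => t k = 0) (st n) = n := by
  induction n with
  | zero => simp [st]
  | succ j ih =>
    rw [st_succ, sigmaW_length_eq (t j) (t_le j)]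
    by_cases h : t j = 2
    · rw [if_pos h]
      rw [Nat.count_succ, ih, if_pos (t_st j)]
    · rw [if_neg h]
      have : st j + 2 = (st j + 1) + 1 := rfl
      rw [this, Nat.count_succ, Nat.count_succ, ih, if_pos (t_st j)]
      have h1 : t (st j + 1) ≠ 0 := by
        have hle := t_le j
        interval_cases h' : t j
        · rw [t_st_one_of_zero h']; omega
        · rw [t_st_one_of_one h']; omega
        · exact absurd rfl h
      rw [if_neg h1]

lemma count_two_st (n : ℕ) :
    Nat.count (fun k => t k = 2) (st n) = Nat.count (fun k => t k = 1) n := by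
  induction n with
  | zero => simp [st]
  | succ j ih =>
    rw [st_succ, sigmaW_length_eq (t j) (t_le j), Nat.count_succ (fun k => t k = 1)]
    by_cases h : t j = 2
    · rw [if_pos h, Nat.count_succ, ih, if_neg (by rw [t_st j]; omega), if_neg (by omega)]
    · rw [if_neg h]
      have : st j + 2 = (st j + 1) + 1 := rfl
      rw [this, Nat.count_succ, Nat.count_succ, ih, if_neg (by rw [t_st j]; omega)]
      have hle := t_le j
      interval_cases h' : t j
      · rw [if_neg (by rw [t_st_one_of_zero h']; omega), if_neg (by omega)]
      · rw [if_pos (t_st_one_of_one h'), if_pos rfl]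
      · exact absurd rfl h

lemma count_one_st (n : ℕ) :
    Nat.count (fun k => t k = 1) (st n) = Nat.count (fun k => t k = 0) n := by
  induction n with
  | zero => simp [st]
  | succ j ih =>
    rw [st_succ, sigmaW_length_eq (t j) (t_le j), Nat.count_succ (fun k => t k = 0)]
    by_cases h : t j = 2
    · rw [if_pos h, Nat.count_succ, ih, if_neg (by rw [t_st j]; omega), if_neg (by omega)]
    · rw [if_neg h]
      have : st j + 2 = (st j + 1) + 1 := rfl
      rw [this, Nat.count_succ, Nat.count_succ, ih, if_neg (by rw [t_st j]; omega)]
      have hle := t_le j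
      interval_cases h' : t j
      · rw [if_pos (t_st_one_of_zero h'), if_pos rfl]
      · rw [if_neg (by rw [t_st_one_of_one h']; omega), if_neg (by omega)]
      · exact absurd rfl h

lemma zero_infinite : {k | t k = 0}.Infinite := by
  apply Set.infinite_of_injective_forall_mem (f := st)
  case hi => exact st_strictMono.injective
  case hf => exact fun n => t_st n

lemma one_infinite : {k | t k = 1}.Infinite := by
  apply Set.infinite_of_injective_forall_mem (f := fun n => st (st n) + 1)
  case hi =>
    intro a b hab
    simp only at hab
    exact st_strictMono.injective (st_strictMono.injective (by omega))
  case hf =>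
    intro n
    exact t_st_one_of_zero (t_st n)

/-- A(n): position of the (n+1)-st occurrence of the letter 1 in t. -/
noncomputable def A (n : ℕ) : ℕ := Nat.nth (fun k => t k = 1) n

/-- B(n): position of the (n+1)-st occurrence of the letter 0 in t. -/
noncomputable def B (n : ℕ) : ℕ := Nat.nth (fun k => t k = 0) n

/-- C(n): position of the (n+1)-st occurrence of the letter 2 in t. -/
noncomputable def C (n : ℕ) : ℕ := Nat.nth (fun k => t k = 2) n

lemma B_eq_st (n : ℕ) : B n = st n := by
  have h := Nat.nth_count (p := fun k => t k = 0) (n := st n) (t_st n)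
  rw [count_zero_st] at h
  exact h

lemma A_eq (n : ℕ) : A n = st (st n) + 1 := by
  have hB : t (B n) = 0 := Nat.nth_mem_of_infinite zero_infinite n
  have hcount : Nat.count (fun k => t k = 1) (st (B n) + 1) = n := by
    rw [Nat.count_succ, count_one_st, if_neg (by rw [t_st (B n)]; omega)]
    simpa [B] using Nat.count_nth_of_infinite zero_infinite n
  have hp : t (st (B n) + 1) = 1 := t_st_one_of_zero hB
  have h := Nat.nth_count (p := fun k => t k = 1) hp
  rw [hcount] at h
  rw [A, h, B_eq_st]

lemma sum_t_eq (n : ℕ) :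
    ∑ j ∈ Finset.range n, (t j : ℤ) =
      (Nat.count (fun k => t k = 1) n : ℤ) + 2 * (Nat.count (fun k => t k = 2) n : ℤ) := by
  induction n with
  | zero => simp
  | succ j ih =>
    rw [Finset.sum_range_succ, ih, Nat.count_succ, Nat.count_succ]
    have := t_le j
    interval_cases h : t j <;> simp [h] <;> push_cast <;> ring

/-- A(n) = 4n + 1 − z(n−1), where z(n) = Σ_{j=0}^{n} t(j) and z(−1)=0. -/
theorem A_formula (n : ℕ) :
    (A n : ℤ) = 4 * n + 1 - ∑ j ∈ Finset.range n, (t j : ℤ) := by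
  have h1 := A_eq n
  have h2 := st_add_count2 n
  have h3 := st_add_count2 (st n)
  have h4 := count_two_st n
  have h5 := sum_t_eq n
  rw [h4] at h3
  rw [h5]
  omega
end

section
/- For the tribonacci position sequences A and B (positions of 1 and 0 in the infinite tribonacci word), the composition B∘B satisfies B(B(k)) = A(k) − 1 for all k ≥ 0. -/
namespace TriAux

open List

def W (m : ℕ) : List ℕ := sigmaL^[m + 1] [0]

lemma sigmaW_length_pos (x : ℕ) : 0 < (sigmaW x).length := by
  rcases x with _ | _ | x <;> simp [sigmaW]

lemma sigmaL_append (a b : List ℕ) : sigmaL (a ++ b) = sigmaL a ++ sigmaL b := by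
  simp [sigmaL]

lemma sigmaL_cons (x : ℕ) (l : List ℕ) : sigmaL (x :: l) = sigmaW x ++ sigmaL l := by
  simp [sigmaL]

lemma sigmaL_length_le (l : List ℕ) : l.length ≤ (sigmaL l).length := by
  induction l with
  | nil => simp [sigmaL]
  | cons x l ih =>
    rw [sigmaL_cons, length_append]
    have := sigmaW_length_pos x
    simp only [length_cons]
    omega

lemma W_succ (m : ℕ) : W (m + 1) = sigmaL (W m) := by
  simp [W, Function.iterate_succ_apply']

lemma W_zero : W 0 = [0, 1] := rfl

lemma sigmaL_prefix {a b : List ℕ} (h : a <+: b) : sigmaL a <+: sigmaL b := by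
  obtain ⟨c, rfl⟩ := h
  exact ⟨sigmaL c, (sigmaL_append a c).symm⟩

lemma W_prefix (m : ℕ) : W m <+: W (m + 1) := by
  induction m with
  | zero => exact ⟨[0, 2], rfl⟩
  | succ m ih =>
    rw [W_succ, W_succ]
    exact sigmaL_prefix ih

lemma W_prefix_le {m m' : ℕ} (h : m ≤ m') : W m <+: W m' := by
  induction h with
  | refl => exact prefix_rfl
  | step _ ih => exact ih.trans (W_prefix _)

lemma W_length (m : ℕ) : m + 2 ≤ (W m).length := by
  induction m with
  | zero => simp [W_zero]
  | succ m ih =>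
    obtain ⟨c, hc⟩ := W_prefix_le (Nat.zero_le m)
    rw [W_zero] at hc
    rw [W_succ, ← hc]
    have h1 : sigmaL ([0, 1] ++ c) = [0, 1] ++ [0, 2] ++ sigmaL c := by
      rw [sigmaL_append]; rfl
    rw [h1]
    have h3 := sigmaL_length_le c
    rw [← hc] at ih
    simp only [length_append, length_cons, length_nil] at *
    omega

lemma t_eq_W {m n : ℕ} (h : n < (W m).length) : t n = (W m).getD n 0 := by
  have ht : t n = (W n).getD n 0 := rfl
  rcases le_total n m with hle | hle
  · obtain ⟨c, hc⟩ := W_prefix_le hle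
    rw [ht, ← hc, getD_append _ _ _ _ (by have := W_length n; omega)]
  · obtain ⟨c, hc⟩ := W_prefix_le hle
    rw [ht, ← hc, getD_append _ _ _ _ h]

/-- Starting position of the n-th block. -/
def s : ℕ → ℕ
  | 0 => 0
  | n + 1 => s n + (sigmaW (t n)).length

lemma s_strict : StrictMono s := by
  apply strictMono_nat_of_lt_succ
  intro n
  have := sigmaW_length_pos (t n)
  simp only [s]
  omega

lemma s_take (n : ℕ) : (sigmaL ((W n).take n)).length = s n := by
  induction n with
  | zero => rfl
  | succ n ih =>
    have hlen : n < (W (n + 1)).length := by have := W_length (n + 1); omega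
    have htake : (W (n + 1)).take n = (W n).take n := by
      obtain ⟨c, hc⟩ := W_prefix n
      rw [← hc, take_append_of_le_length (by have := W_length n; omega)]
    rw [take_succ, getElem?_eq_getElem hlen]
    rw [sigmaL_append, length_append, htake, ih]
    have : (W (n + 1))[n] = t n := by
      rw [t_eq_W hlen, getD_eq_getElem _ _ hlen]
    rw [this]
    simp [sigmaL, s]

lemma block (n : ℕ) {j : ℕ} (hj : j < (sigmaW (t n)).length) :
    t (s n + j) = (sigmaW (t n)).getD j 0 := by
  have hn : n < (W n).length := by have := W_length n; omega
  have hdecomp : W (n + 1) = sigmaL ((W n).take n) ++ (sigmaW (t n) ++ sigmaL ((W n).drop (n + 1))) := by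
    rw [W_succ]
    conv_lhs => rw [← take_append_drop n (W n)]
    rw [sigmaL_append, drop_eq_getElem_cons hn, sigmaL_cons]
    have : (W n)[n] = t n := by rw [t_eq_W hn, getD_eq_getElem _ _ hn]
    rw [this]
  have hslen : (sigmaL ((W n).take n)).length = s n := s_take n
  have hlt : s n + j < (W (n + 1)).length := by
    rw [hdecomp, length_append, length_append]
    omega
  rw [t_eq_W hlt, hdecomp, getD_append_right _ _ _ _ (by omega), hslen]
  have : s n + j - s n = j := by omega
  rw [this, getD_append _ _ _ _ hj]

lemma t_s (n : ℕ) : t (s n) = 0 := by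
  have h := block n (j := 0) (sigmaW_length_pos (t n))
  rw [Nat.add_zero] at h
  rw [h]
  rcases h' : t n with _ | _ | x <;> simp [sigmaW]

lemma cover (q : ℕ) : ∃ n, s n ≤ q ∧ q < s (n + 1) := by
  induction q with
  | zero =>
    refine ⟨0, le_refl _, ?_⟩
    have := sigmaW_length_pos (t 0)
    simp only [s]
    omega
  | succ q ih =>
    obtain ⟨n, h1, h2⟩ := ih
    rcases lt_or_ge (q + 1) (s (n + 1)) with h | h
    · exact ⟨n, by omega, h⟩
    · refine ⟨n + 1, h, ?_⟩
      have : s (n + 1) < s (n + 1 + 1) := s_strict (by omega)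
      omega

lemma s_succ (n : ℕ) : s (n + 1) = s n + (sigmaW (t n)).length := rfl

lemma zeros_iff (q : ℕ) : t q = 0 ↔ ∃ n, s n = q := by
  constructor
  · intro hq
    obtain ⟨n, h1, h2⟩ := cover q
    obtain ⟨j, rfl⟩ : ∃ j, q = s n + j := ⟨q - s n, by omega⟩
    rw [s_succ] at h2
    have hj : j < (sigmaW (t n)).length := by omega
    have hb := block n hj
    rcases h' : t n with _ | _ | x <;> rw [h'] at hb hj <;>
        simp only [sigmaW, length_cons, length_nil] at hj <;>
        interval_cases j <;>
        simp only [sigmaW, getD_cons_zero, getD_cons_succ] at hb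
    · exact ⟨n, by omega⟩
    · omega
    · exact ⟨n, by omega⟩
    · omega
    · exact ⟨n, by omega⟩
  · rintro ⟨n, rfl⟩
    exact t_s n

lemma ones_iff (q : ℕ) : t q = 1 ↔ ∃ k, s (s k) + 1 = q := by
  constructor
  · intro hq
    obtain ⟨n, h1, h2⟩ := cover q
    obtain ⟨j, rfl⟩ : ∃ j, q = s n + j := ⟨q - s n, by omega⟩
    rw [s_succ] at h2
    have hj : j < (sigmaW (t n)).length := by omega
    have hb := block n hj
    have hn0 : t n = 0 ∧ j = 1 := by
      rcases h' : t n with _ | _ | x <;> rw [h'] at hb hj <;>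
          simp only [sigmaW, length_cons, length_nil] at hj <;>
          interval_cases j <;>
          simp only [sigmaW, getD_cons_zero, getD_cons_succ] at hb <;>
          omega
    obtain ⟨k, hk⟩ := (zeros_iff n).1 hn0.1
    exact ⟨k, by rw [hk, hn0.2]⟩
  · rintro ⟨k, rfl⟩
    have h0 : t (s k) = 0 := t_s k
    have hb := block (s k) (j := 1) (by rw [h0]; simp [sigmaW])
    rw [hb, h0]
    rfl

lemma nth_of_strictMono {p : ℕ → Prop} [DecidablePred p] {f : ℕ → ℕ} (hf : StrictMono f)
    (h : ∀ q, p q ↔ ∃ k, f k = q) (n : ℕ) : Nat.nth p n = f n := by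
  have hp : p (f n) := (h _).2 ⟨n, rfl⟩
  have hc : Nat.count p (f n) = n := by
    rw [Nat.count_eq_card_filter_range]
    have heq : (Finset.range (f n)).filter p = (Finset.range n).image f := by
      ext q
      simp only [Finset.mem_filter, Finset.mem_range, Finset.mem_image]
      constructor
      · rintro ⟨hq, hpq⟩
        obtain ⟨k, rfl⟩ := (h q).1 hpq
        exact ⟨k, hf.lt_iff_lt.mp hq, rfl⟩
      · rintro ⟨k, hk, rfl⟩
        exact ⟨hf hk, (h _).2 ⟨k, rfl⟩⟩
    rw [heq, Finset.card_image_of_injective _ hf.injective, Finset.card_range]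
  have := Nat.nth_count hp
  rwa [hc] at this

lemma B_eq_s (n : ℕ) : B n = s n :=
  nth_of_strictMono s_strict zeros_iff n

lemma A_eq (k : ℕ) : A k = s (s k) + 1 :=
  nth_of_strictMono (fun a b hab => Nat.succ_lt_succ (s_strict (s_strict hab))) ones_iff k

end TriAux

/-- B(B(k)) = A(k) − 1 for all k ≥ 0. -/
theorem B_comp_B (k : ℕ) : B (B k) = A k - 1 := by
  rw [TriAux.B_eq_s k, TriAux.B_eq_s (TriAux.s k), TriAux.A_eq k]
  omega
end

section
/- For the tribonacci position sequences A, B, C and counting functions z_A, z_B, z_C (z_X(n) = number of j ≤ n with t(j) equal to the letter associated with X), one has z_B(A(k)) = B(k) + 1, z_A(C(k)) = B(k) + 1, z_B(C(k)) = A(k) + 1, and z_C(A(k)) = A(k) − B(k) − (k+1) for all k ≥ 0. -/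
namespace Trib

def W (n : ℕ) : List ℕ := sigmaL^[n] [0]

lemma W_succ (n : ℕ) : W (n + 1) = sigmaL (W n) := Function.iterate_succ_apply' _ _ _

lemma sigmaL_append (a b : List ℕ) : sigmaL (a ++ b) = sigmaL a ++ sigmaL b := by
  simp [sigmaL]

lemma sigmaW_def (x : ℕ) : sigmaW x = if x = 0 then [0,1] else if x = 1 then [0,2] else [0] := by
  match x with
  | 0 => rfl
  | 1 => rfl
  | n+2 => rfl

lemma sigmaL_cons (a : ℕ) (l : List ℕ) : sigmaL (a :: l) = sigmaW a ++ sigmaL l := rfl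

lemma sigmaL_singleton (a : ℕ) : sigmaL [a] = sigmaW a := by simp [sigmaL]

lemma length_le_sigmaL (w : List ℕ) : w.length ≤ (sigmaL w).length := by
  induction w with
  | nil => simp [sigmaL]
  | cons a l ih =>
    rw [sigmaL_cons, List.length_append, List.length_cons]
    have : 1 ≤ (sigmaW a).length := by rw [sigmaW_def]; split <;> [simp; skip]; split <;> simp
    omega

lemma W_prefix (n : ℕ) : W n <+: W (n + 1) := by
  induction n with
  | zero => exact ⟨[1], rfl⟩
  | succ n ih =>
    obtain ⟨r, hr⟩ := ih
    rw [W_succ, W_succ, ← hr, sigmaL_append]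
    exact ⟨sigmaL r, rfl⟩

lemma W_prefix_le {m n : ℕ} (h : m ≤ n) : W m <+: W n := by
  induction n, h using Nat.le_induction with
  | base => exact List.prefix_refl _
  | succ n _ ih => exact ih.trans (W_prefix n)

lemma W_cons (n : ℕ) : ∃ r, W n = 0 :: r := by
  obtain ⟨r, hr⟩ := W_prefix_le (Nat.zero_le n)
  exact ⟨r, by simpa [W] using hr.symm⟩

lemma length_W (n : ℕ) : n + 1 ≤ (W n).length := by
  induction n with
  | zero => simp [W]
  | succ n ih =>
    obtain ⟨r, hr⟩ := W_cons n
    have h2 := length_le_sigmaL r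
    rw [W_succ, hr, sigmaL_cons]
    rw [hr] at ih
    simp only [List.length_append, List.length_cons] at *
    have : (sigmaW 0).length = 2 := rfl
    omega

lemma getD_of_prefix {l₁ l₂ : List ℕ} (h : l₁ <+: l₂) {n : ℕ} (hn : n < l₁.length) :
    l₂.getD n 0 = l₁.getD n 0 := by
  obtain ⟨r, rfl⟩ := h
  rw [List.getD_eq_getElem?_getD, List.getD_eq_getElem?_getD,
    List.getElem?_append_left hn]

lemma t_spec {m n : ℕ} (h : n < (W m).length) : (W m).getD n 0 = t n := by
  have h2 : n < (W (n + 1)).length := (by have := length_W (n + 1); omega)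
  show _ = (W (n+1)).getD n 0
  rcases le_total m (n + 1) with hmn | hmn
  · rw [getD_of_prefix (W_prefix_le hmn) h]
  · rw [getD_of_prefix (W_prefix_le hmn) h2]

lemma mem_W_le {n : ℕ} {x : ℕ} (h : x ∈ W n) : x ≤ 2 := by
  induction n generalizing x with
  | zero => simp [W] at h; omega
  | succ n ih =>
    rw [W_succ] at h
    simp only [sigmaL, List.mem_flatMap] at h
    obtain ⟨a, _, hx⟩ := h
    rw [sigmaW_def] at hx
    split at hx <;> [skip; split at hx] <;> simp at hx <;> omega

lemma t_le_two (n : ℕ) : t n ≤ 2 := by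
  have h : n < (W (n + 1)).length := (by have := length_W (n + 1); omega)
  rw [← t_spec h]
  rw [List.getD_eq_getElem?_getD, List.getElem?_eq_getElem h]
  exact mem_W_le (List.getElem_mem h)

/-- Length of the block produced by letter `t n`. -/
def L (n : ℕ) : ℕ := (sigmaW (t n)).length

/-- Start of block `n` in the infinite word. -/
def St (n : ℕ) : ℕ := ∑ i ∈ Finset.range n, L i

lemma L_pos (n : ℕ) : 1 ≤ L n := by
  unfold L; rw [sigmaW_def]; split <;> [simp; skip]; split <;> simp

lemma L_le_two (n : ℕ) : L n ≤ 2 := by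
  unfold L; rw [sigmaW_def]; split <;> [simp; skip]; split <;> simp

lemma L_of_zero {n : ℕ} (h : t n = 0) : L n = 2 := by simp [L, h, sigmaW_def]

lemma L_of_one {n : ℕ} (h : t n = 1) : L n = 2 := by simp [L, h, sigmaW_def]

lemma L_of_two {n : ℕ} (h : t n = 2) : L n = 1 := by simp [L, h, sigmaW_def]

lemma St_succ (n : ℕ) : St (n + 1) = St n + L n := Finset.sum_range_succ _ _

lemma St_zero : St 0 = 0 := rfl

lemma St_strictMono : StrictMono St :=
  strictMono_nat_of_lt_succ fun n => by have := L_pos n; rw [St_succ]; omega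

lemma St_take {m j : ℕ} (h : j ≤ (W m).length) : (sigmaL ((W m).take j)).length = St j := by
  induction j with
  | zero => simp [sigmaL, St_zero]
  | succ j ih =>
    have hj : j < (W m).length := h
    rw [List.take_succ, List.getElem?_eq_getElem hj]
    simp only [Option.toList_some]
    rw [sigmaL_append, List.length_append, ih (le_of_lt hj), St_succ, sigmaL_singleton]
    congr 1
    unfold L
    congr 1
    rw [← t_spec hj, List.getD_eq_getElem?_getD, List.getElem?_eq_getElem hj, Option.getD_some]

lemma block_value {j i : ℕ} (hi : i < L j) : t (St j + i) = (sigmaW (t j)).getD i 0 := by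
  set m := j with hm
  have hj : j < (W m).length := lt_of_lt_of_le (Nat.lt_succ_self j) (length_W m)
  have hWm : W m = (W m).take j ++ t j :: (W m).drop (j + 1) := by
    conv_lhs => rw [← List.take_append_drop j (W m)]
    congr 1
    rw [List.drop_eq_getElem_cons hj]
    congr 1
    rw [← t_spec hj, List.getD_eq_getElem?_getD, List.getElem?_eq_getElem hj, Option.getD_some]
  have hW1 : W (m + 1) = sigmaL ((W m).take j) ++ (sigmaW (t j) ++ sigmaL ((W m).drop (j+1))) := by
    rw [W_succ]
    conv_lhs => rw [hWm]
    rw [sigmaL_append, sigmaL_cons]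
  have hlen : St j + i < (W (m+1)).length := by
    rw [hW1]
    simp only [List.length_append]
    rw [St_take (le_of_lt hj)]
    have : i < (sigmaW (t j)).length := hi
    omega
  rw [← t_spec hlen, hW1]
  rw [List.getD_eq_getElem?_getD, List.getElem?_append_right (by rw [St_take (le_of_lt hj)]; omega)]
  rw [St_take (le_of_lt hj)]
  have h2 : St j + i - St j = i := by omega
  rw [h2, List.getElem?_append_left hi, ← List.getD_eq_getElem?_getD]

lemma t_St (j : ℕ) : t (St j) = 0 := by
  have h := block_value (show 0 < L j from L_pos j)
  rw [Nat.add_zero] at h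
  rw [h, sigmaW_def]; split <;> [rfl; skip]; split <;> rfl

lemma t_St_one_of_zero {j : ℕ} (h : t j = 0) : t (St j + 1) = 1 := by
  have hb := block_value (show 1 < L j by rw [L_of_zero h]; omega)
  rw [hb, h]; rfl

lemma t_St_one_of_one {j : ℕ} (h : t j = 1) : t (St j + 1) = 2 := by
  have hb := block_value (show 1 < L j by rw [L_of_one h]; omega)
  rw [hb, h]; rfl

/-- Every position decomposes into a block. -/
lemma block_decomp (n : ℕ) : ∃ j i, n = St j + i ∧ i < L j := by
  induction n with
  | zero => exact ⟨0, 0, by simp [St_zero], L_pos 0⟩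
  | succ n ih =>
    obtain ⟨j, i, rfl, hi⟩ := ih
    rcases Nat.lt_or_ge (i + 1) (L j) with h | h
    · exact ⟨j, i + 1, by omega, h⟩
    · exact ⟨j + 1, 0, by rw [St_succ]; omega, L_pos _⟩

lemma char0 (m : ℕ) : t m = 0 ↔ ∃ j, m = St j := by
  constructor
  · intro hm
    obtain ⟨j, i, rfl, hi⟩ := block_decomp m
    have hL := L_le_two j
    have hi2 : i < 2 := lt_of_lt_of_le hi hL
    interval_cases i
    · exact ⟨j, rfl⟩
    · exfalso
      have := t_le_two j
      interval_cases h : t j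
      · rw [t_St_one_of_zero h] at hm; omega
      · rw [t_St_one_of_one h] at hm; omega
      · rw [L_of_two h] at hi; omega
  · rintro ⟨j, rfl⟩; exact t_St j

lemma char1 (m : ℕ) : t m = 1 ↔ ∃ j, t j = 0 ∧ m = St j + 1 := by
  constructor
  · intro hm
    obtain ⟨j, i, rfl, hi⟩ := block_decomp m
    have hL := L_le_two j
    have hi2 : i < 2 := lt_of_lt_of_le hi hL
    interval_cases i
    · rw [Nat.add_zero, t_St] at hm; omega
    · have := t_le_two j
      interval_cases h : t j
      · exact ⟨j, h, rfl⟩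
      · rw [t_St_one_of_one h] at hm; omega
      · rw [L_of_two h] at hi; omega
  · rintro ⟨j, hj, rfl⟩; exact t_St_one_of_zero hj

lemma char2 (m : ℕ) : t m = 2 ↔ ∃ j, t j = 1 ∧ m = St j + 1 := by
  constructor
  · intro hm
    obtain ⟨j, i, rfl, hi⟩ := block_decomp m
    have hL := L_le_two j
    have hi2 : i < 2 := lt_of_lt_of_le hi hL
    interval_cases i
    · rw [Nat.add_zero, t_St] at hm; omega
    · have := t_le_two j
      interval_cases h : t j
      · rw [t_St_one_of_zero h] at hm; omega
      · exact ⟨j, h, rfl⟩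
      · rw [L_of_two h] at hi; omega
  · rintro ⟨j, hj, rfl⟩; exact t_St_one_of_one hj

lemma card_zero_filter {n M : ℕ} (h : ∀ j, St j < n ↔ j < M) :
    ((Finset.range n).filter (fun m => t m = 0)).card = M := by
  have himg : (Finset.range n).filter (fun m => t m = 0) = (Finset.range M).image St := by
    ext m
    simp only [Finset.mem_filter, Finset.mem_range, Finset.mem_image, char0]
    constructor
    · rintro ⟨hmn, j, rfl⟩; exact ⟨j, (h j).mp hmn, rfl⟩
    · rintro ⟨j, hj, rfl⟩; exact ⟨(h j).mpr hj, j, rfl⟩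
  rw [himg, Finset.card_image_of_injective _ St_strictMono.injective, Finset.card_range]

lemma card_shift {q : ℕ → Prop} [DecidablePred q] {c : ℕ}
    (hq : ∀ m, t m = c ↔ ∃ j, q j ∧ m = St j + 1) {n M : ℕ}
    (h : ∀ j, St j + 1 < n ↔ j < M) :
    ((Finset.range n).filter (fun m => t m = c)).card
      = ((Finset.range M).filter q).card := by
  have himg : (Finset.range n).filter (fun m => t m = c)
      = ((Finset.range M).filter q).image (fun j => St j + 1) := by
    ext m
    simp only [Finset.mem_filter, Finset.mem_range, Finset.mem_image, hq]
    constructor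
    · rintro ⟨hmn, j, hqj, rfl⟩; exact ⟨j, ⟨(h j).mp hmn, hqj⟩, rfl⟩
    · rintro ⟨j, ⟨hj, hqj⟩, rfl⟩; exact ⟨(h j).mpr hj, j, hqj, rfl⟩
  have hinj : Function.Injective (fun j => St j + 1) :=
    fun a b hab => St_strictMono.injective (by simpa using hab)
  rw [himg, Finset.card_image_of_injective _ hinj]

lemma count_zero (n M : ℕ) (h : ∀ j, St j < n ↔ j < M) :
    Nat.count (fun m => t m = 0) n = M := by
  rw [Nat.count_eq_card_filter_range]; exact card_zero_filter h

lemma B_eq (k : ℕ) : Nat.nth (fun m => t m = 0) k = St k := by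
  have h1 : Nat.count (fun m => t m = 0) (St k) = k :=
    count_zero _ _ (fun j => St_strictMono.lt_iff_lt)
  have h2 := Nat.nth_count (p := fun m => t m = 0) (t_St k)
  rw [h1] at h2
  exact h2

lemma count_one (k : ℕ) : Nat.count (fun m => t m = 1) (St (St k) + 1) = k := by
  rw [Nat.count_eq_card_filter_range]
  rw [card_shift char1 (fun j => by
    constructor
    · intro hj; exact St_strictMono.lt_iff_lt.mp (Nat.lt_of_add_lt_add_right hj)
    · intro hj; exact Nat.add_lt_add_right (St_strictMono hj) 1)]
  exact card_zero_filter (fun j => St_strictMono.lt_iff_lt)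

lemma A_eq (k : ℕ) : Nat.nth (fun m => t m = 1) k = St (St k) + 1 := by
  have h2 := Nat.nth_count (p := fun m => t m = 1) (t_St_one_of_zero (t_St k))
  rw [count_one] at h2
  exact h2

lemma iff_helper {N : ℕ} (hL : L N = 2) (j : ℕ) : St j < St N + 2 ↔ j < N + 1 := by
  rw [show St N + 2 = St (N + 1) by rw [St_succ, hL], St_strictMono.lt_iff_lt]

lemma iff_helper2 (N j : ℕ) : St j + 1 < St N + 2 ↔ j < N + 1 := by
  have h1 := St_strictMono.le_iff_le (a := j) (b := N)
  omega

lemma iff_helper3 (N j : ℕ) : St j < St N + 1 ↔ j < N + 1 := by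
  have h1 := St_strictMono.le_iff_le (a := j) (b := N)
  omega

lemma C_eq (k : ℕ) :
    Nat.nth (fun m => t m = 2) k = St (Nat.nth (fun m => t m = 1) k) + 1 := by
  set a := Nat.nth (fun m => t m = 1) k with ha
  have haeq : a = St (St k) + 1 := A_eq k
  have hta : t a = 1 := by rw [haeq]; exact t_St_one_of_zero (t_St k)
  have hcount : Nat.count (fun m => t m = 2) (St a + 1) = k := by
    rw [Nat.count_eq_card_filter_range]
    rw [card_shift char2 (fun j => by
      constructor
      · intro hj; exact St_strictMono.lt_iff_lt.mp (Nat.lt_of_add_lt_add_right hj)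
      · intro hj; exact Nat.add_lt_add_right (St_strictMono hj) 1)]
    rw [← Nat.count_eq_card_filter_range, haeq]
    exact count_one k
  have h2 := Nat.nth_count (p := fun m => t m = 2) (t_St_one_of_one hta)
  rw [hcount] at h2
  exact h2

lemma card_partition (n : ℕ) :
    ((Finset.range n).filter (fun m => t m = 0)).card
      + ((Finset.range n).filter (fun m => t m = 1)).card
      + ((Finset.range n).filter (fun m => t m = 2)).card = n := by
  simp only [← Nat.count_eq_card_filter_range]
  induction n with
  | zero => simp
  | succ n ih =>
    simp only [Nat.count_succ]
    have h := t_le_two n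
    interval_cases h2 : t n <;> simp [h2] <;> omega

end Trib

open Trib

/-- z_B(A(k)) = B(k) + 1, z_A(C(k)) = B(k) + 1, z_B(C(k)) = A(k) + 1, and
z_C(A(k)) = A(k) − B(k) − (k+1), where z_X(n) counts indices j ≤ n with t(j) the
letter associated to X (1 for A, 0 for B, 2 for C). -/
theorem z_comp_formulas (k : ℕ) :
    ((Finset.range (A k + 1)).filter (fun j => t j = 0)).card = B k + 1 ∧
    ((Finset.range (C k + 1)).filter (fun j => t j = 1)).card = B k + 1 ∧
    ((Finset.range (C k + 1)).filter (fun j => t j = 0)).card = A k + 1 ∧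
    ((((Finset.range (A k + 1)).filter (fun j => t j = 2)).card : ℤ)
      = (A k : ℤ) - B k - (k + 1)) := by
  have hB : B k = St k := B_eq k
  have hA : A k = St (St k) + 1 := A_eq k
  have htA : t (A k) = 1 := by rw [hA]; exact t_St_one_of_zero (t_St k)
  have hC : C k = St (A k) + 1 := C_eq k
  have e1 : A k + 1 = St (St k) + 2 := by omega
  have e2 : C k + 1 = St (A k) + 2 := by omega
  have goal1 : ((Finset.range (A k + 1)).filter (fun j => t j = 0)).card = B k + 1 := by
    rw [e1, hB]
    exact card_zero_filter (iff_helper (L_of_zero (t_St k)))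
  have goal3 : ((Finset.range (C k + 1)).filter (fun j => t j = 0)).card = A k + 1 := by
    rw [e2]
    exact card_zero_filter (iff_helper (L_of_one htA))
  have goal2 : ((Finset.range (C k + 1)).filter (fun j => t j = 1)).card = B k + 1 := by
    rw [e2, card_shift char1 (iff_helper2 (A k)), goal1]
  have z1 : ((Finset.range (A k + 1)).filter (fun j => t j = 1)).card = k + 1 := by
    rw [e1, card_shift char1 (iff_helper2 (St k))]
    exact card_zero_filter (iff_helper3 k)
  have hpart := card_partition (A k + 1)
  refine ⟨goal1, goal2, goal3, ?_⟩
  rw [goal1, z1] at hpart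
  have hlow : B k + 1 ≤ A k := by
    rw [hA, hB]
    have h1 : St k ≤ St (St k) := St_strictMono.le_apply
    have h2 : k ≤ St k := St_strictMono.le_apply
    omega
  omega
end
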